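/- For marked-scaled simplicial sets X, Y, Z, the canonical associativity isomorphism (X × Y) × Z ≅ X × (Y × Z) of underlying simplicial sets identifies the marked edges of (X ⊗ Y) ⊗ Z with the marked edges of X ⊗ (Y ⊗ Z), and identifies the thin triangles of (X ⊗ Y) ⊗ Z with the thin triangles of X ⊗ (Y ⊗ Z); hence the Gray tensor product of marked-scaled simplicial sets is associative. -/

import Mathlib

open CategoryTheory Simplicial

/-- The objectwise product of two simplicial sets. -/
def sProd (X Y : SSet) : SSet where
  obj n := X.obj n × Y.obj n
  map f := TypeCat.ofHom fun p => (X.map f p.1, Y.map f p.2)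
  map_id n := by
    ext p <;> simp
  map_comp f g := by
    ext p <;> simp

/-- The data of a marked-scaled simplicial set: a simplicial set together with a set of
marked edges and a set of thin triangles. -/
structure PreMSSet where
  carrier : SSet
  marked : Set (carrier _⦋1⦌)
  thin : Set (carrier _⦋2⦌)

/-- The data of a `PreMSSet` is a marked-scaled simplicial set when the marked edges contain
all degenerate edges and the thin triangles contain all degenerate triangles. -/
def IsMSSet (X : PreMSSet) : Prop :=
  (∀ v : X.carrier _⦋0⦌, X.carrier.map (SimplexCategory.σ (0 : Fin 1)).op v ∈ X.marked) ∧
  (∀ e : X.carrier _⦋1⦌, X.carrier.map (SimplexCategory.σ (0 : Fin 2)).op e ∈ X.thin) ∧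
  (∀ e : X.carrier _⦋1⦌, X.carrier.map (SimplexCategory.σ (1 : Fin 2)).op e ∈ X.thin)

/-- The Gray tensor product of marked-scaled simplicial sets: the underlying simplicial set
is the product; an edge is marked iff both components are marked; a triangle `(σ, σ')` is
thin iff both components are thin and, in addition, the restriction of `σ'` to `Δ^{0,1}`
(the `d₂`-face) is marked in `Y` or the restriction of `σ` to `Δ^{1,2}` (the `d₀`-face) is
marked in `X`. -/
def gray (X Y : PreMSSet) : PreMSSet where
  carrier := sProd X.carrier Y.carrier
  marked := {e : X.carrier _⦋1⦌ × Y.carrier _⦋1⦌ | e.1 ∈ X.marked ∧ e.2 ∈ Y.marked}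
  thin := {σ : X.carrier _⦋2⦌ × Y.carrier _⦋2⦌ |
    σ.1 ∈ X.thin ∧ σ.2 ∈ Y.thin ∧
      (Y.carrier.map (SimplexCategory.δ (2 : Fin 3)).op σ.2 ∈ Y.marked ∨
        X.carrier.map (SimplexCategory.δ (0 : Fin 3)).op σ.1 ∈ X.marked)}

/-- For marked-scaled simplicial sets `X, Y, Z`, the canonical associativity isomorphism
`(X × Y) × Z ≅ X × (Y × Z)` of underlying simplicial sets identifies the marked edges of
`(X ⊗ Y) ⊗ Z` with those of `X ⊗ (Y ⊗ Z)`, and the thin triangles of `(X ⊗ Y) ⊗ Z` with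
those of `X ⊗ (Y ⊗ Z)`: the Gray tensor product is associative. -/
theorem gray_assoc (X Y Z : PreMSSet) (hX : IsMSSet X) (hY : IsMSSet Y) (hZ : IsMSSet Z) :
    (∀ (e₁ : X.carrier _⦋1⦌) (e₂ : Y.carrier _⦋1⦌) (e₃ : Z.carrier _⦋1⦌),
      (((e₁, e₂), e₃) ∈ (gray (gray X Y) Z).marked ↔
        (e₁, (e₂, e₃)) ∈ (gray X (gray Y Z)).marked)) ∧
    (∀ (σ₁ : X.carrier _⦋2⦌) (σ₂ : Y.carrier _⦋2⦌) (σ₃ : Z.carrier _⦋2⦌),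
      (((σ₁, σ₂), σ₃) ∈ (gray (gray X Y) Z).thin ↔
        (σ₁, (σ₂, σ₃)) ∈ (gray X (gray Y Z)).thin)) := by
  constructor
  · intro e₁ e₂ e₃
    simp only [gray, sProd, Set.mem_setOf_eq, TypeCat.ofHom_apply]
    simp only [Membership.mem, Set.Mem, Set.ofPred]
    tauto
  · intro σ₁ σ₂ σ₃
    simp only [gray, sProd, Set.mem_setOf_eq, TypeCat.ofHom_apply]
    simp only [Membership.mem, Set.Mem, Set.ofPred]
    tauto
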